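/- Let κ ∈ {0,1}, let v_i, v_j ∈ ℝ^d with v_i ≠ v_j, let ω ∈ ℝ^d with ‖ω‖ = 1, and define the collided pair v_i' = v_i − (κ/2)(g − ‖g‖ω), v_j' = v_j + (κ/2)(g − ‖g‖ω) with g = v_i − v_j; let u = (v_i + v_j)/2, T = (1/(2d))(‖v_i − u‖² + ‖v_j − u‖²) and T' = (1/(2d))(‖v_i' − u‖² + ‖v_j' − u‖²), and assume T' > 0. Then the thermalized velocities v_i'' = (v_i' − u)√(T/T') + u and v_j'' = (v_j' − u)√(T/T') + u satisfy v_i'' + v_j'' = v_i + v_j and ‖v_i''‖² + ‖v_j''‖² = ‖v_i‖² + ‖v_j‖², i.e. the regularized collision followed by thermalization conserves momentum and kinetic energy exactly. -/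

import Mathlib

lemma stmt4_aux {E : Type*} [NormedAddCommGroup E] [InnerProductSpace ℝ E]
    (a b u : E) (h : a - u + (b - u) = 0) :
    ‖a‖ ^ 2 + ‖b‖ ^ 2 = ‖a - u‖ ^ 2 + ‖b - u‖ ^ 2 + 2 * ‖u‖ ^ 2 := by
  have ha : a = (a - u) + u := by abel
  have hb : b = (b - u) + u := by abel
  have h1 := norm_add_sq_real (a - u) u
  have h2 := norm_add_sq_real (b - u) u
  have h3 : inner ℝ (a - u) u + inner ℝ (b - u) u = (0 : ℝ) := by
    rw [← inner_add_left, h, inner_zero_left]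
  rw [← ha] at h1
  rw [← hb] at h2
  linarith

/-- The regularized collision with κ ∈ {0,1} followed by the thermalization
process conserves momentum and kinetic energy exactly. -/
theorem stmt_4 (d : ℕ) (κ : ℝ) (hκ : κ = 0 ∨ κ = 1)
    (vi vj ω : EuclideanSpace ℝ (Fin d)) (hij : vi ≠ vj) (hω : ‖ω‖ = 1)
    (g : EuclideanSpace ℝ (Fin d)) (hg : g = vi - vj)
    (vi' vj' : EuclideanSpace ℝ (Fin d))
    (hvi' : vi' = vi - (κ / 2) • (g - ‖g‖ • ω))
    (hvj' : vj' = vj + (κ / 2) • (g - ‖g‖ • ω))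
    (u : EuclideanSpace ℝ (Fin d)) (hu : u = (1 / 2 : ℝ) • (vi + vj))
    (T T' : ℝ)
    (hT : T = (1 / (2 * (d : ℝ))) * (‖vi - u‖ ^ 2 + ‖vj - u‖ ^ 2))
    (hT' : T' = (1 / (2 * (d : ℝ))) * (‖vi' - u‖ ^ 2 + ‖vj' - u‖ ^ 2))
    (hT'pos : 0 < T')
    (vi'' vj'' : EuclideanSpace ℝ (Fin d))
    (hvi'' : vi'' = Real.sqrt (T / T') • (vi' - u) + u)
    (hvj'' : vj'' = Real.sqrt (T / T') • (vj' - u) + u) :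
    vi'' + vj'' = vi + vj ∧
    ‖vi''‖ ^ 2 + ‖vj''‖ ^ 2 = ‖vi‖ ^ 2 + ‖vj‖ ^ 2 := by
  have hd : (d : ℝ) ≠ 0 := by
    intro h0
    rw [h0] at hT'
    simp at hT'
    exact absurd hT' (by linarith)
  have hdpos : (0 : ℝ) < (d : ℝ) := lt_of_le_of_ne (Nat.cast_nonneg d) (Ne.symm hd)
  -- sum of primed relative velocities is zero
  have hz' : vi' - u + (vj' - u) = 0 := by
    rw [hvi', hvj', hu]; module
  have hz : vi - u + (vj - u) = 0 := by
    rw [hu]; module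
  -- momentum
  have hmom : vi'' + vj'' = vi + vj := by
    rw [hvi'', hvj'']
    have : Real.sqrt (T / T') • (vi' - u) + u + (Real.sqrt (T / T') • (vj' - u) + u)
        = Real.sqrt (T / T') • (vi' - u + (vj' - u)) + (2 : ℝ) • u := by
      module
    rw [this, hz', smul_zero, zero_add, hu]; module
  refine ⟨hmom, ?_⟩
  -- energy
  have hz'' : vi'' - u + (vj'' - u) = 0 := by
    rw [hvi'', hvj'']
    have : Real.sqrt (T / T') • (vi' - u) + u - u + (Real.sqrt (T / T') • (vj' - u) + u - u)
        = Real.sqrt (T / T') • (vi' - u + (vj' - u)) := by module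
    rw [this, hz', smul_zero]
  have e1 := stmt4_aux vi'' vj'' u hz''
  have e2 := stmt4_aux vi vj u hz
  rw [e1, e2]
  have hTnn : 0 ≤ T := by
    rw [hT]
    positivity
  have hr : 0 ≤ T / T' := div_nonneg hTnn hT'pos.le
  have hsq : Real.sqrt (T / T') ^ 2 = T / T' := Real.sq_sqrt hr
  have hni : ‖vi'' - u‖ ^ 2 = (T / T') * ‖vi' - u‖ ^ 2 := by
    rw [hvi'']
    have : Real.sqrt (T / T') • (vi' - u) + u - u = Real.sqrt (T / T') • (vi' - u) := by module
    rw [this, norm_smul, Real.norm_eq_abs, abs_of_nonneg (Real.sqrt_nonneg _), mul_pow, hsq]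
  have hnj : ‖vj'' - u‖ ^ 2 = (T / T') * ‖vj' - u‖ ^ 2 := by
    rw [hvj'']
    have : Real.sqrt (T / T') • (vj' - u) + u - u = Real.sqrt (T / T') • (vj' - u) := by module
    rw [this, norm_smul, Real.norm_eq_abs, abs_of_nonneg (Real.sqrt_nonneg _), mul_pow, hsq]
  have hS' : ‖vi' - u‖ ^ 2 + ‖vj' - u‖ ^ 2 = 2 * (d : ℝ) * T' := by
    rw [hT']; field_simp
  have hS : ‖vi - u‖ ^ 2 + ‖vj - u‖ ^ 2 = 2 * (d : ℝ) * T := by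
    rw [hT]; field_simp
  rw [hni, hnj]
  have : T / T' * ‖vi' - u‖ ^ 2 + T / T' * ‖vj' - u‖ ^ 2
      = T / T' * (‖vi' - u‖ ^ 2 + ‖vj' - u‖ ^ 2) := by ring
  rw [this, hS', hS]
  field_simp
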